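/- Let f₁, f₂ : ℝ^d → ℝ be convex functions such that the argmin set of each is nonempty and compact. Then the argmin set of f₁ + f₂ is nonempty and compact. -/

import Mathlib

open Filter Topology Bornology Metric Set

/-- A convex continuous function on ℝ^d whose argmin set is nonempty and bounded has
bounded sublevel sets. -/
lemma sublevel_bounded {d : ℕ} {f : EuclideanSpace ℝ (Fin d) → ℝ}
    (hf : ConvexOn ℝ Set.univ f) (hc : Continuous f)
    {x₀ : EuclideanSpace ℝ (Fin d)} (hx₀ : ∀ y, f x₀ ≤ f y)
    (hb : IsBounded {x | ∀ y, f x ≤ f y}) (c : ℝ) :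
    IsBounded {x | f x ≤ c} := by
  by_contra hS
  -- choose points far away in the sublevel set
  have hchoice : ∀ n : ℕ, ∃ x, f x ≤ c ∧ (n : ℝ) < dist x x₀ := by
    intro n
    have : ¬ {x | f x ≤ c} ⊆ closedBall x₀ n := by
      intro h
      exact hS ((isBounded_iff_subset_closedBall x₀).2 ⟨n, h⟩)
    obtain ⟨x, hx, hxd⟩ := Set.not_subset.1 this
    exact ⟨x, hx, by simpa [Metric.mem_closedBall, not_le] using hxd⟩
  choose x hx hxd using hchoice
  set M : ℝ := max (f x₀) c with hM
  have hr : ∀ n : ℕ, (n : ℝ) < ‖x n - x₀‖ := by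
    intro n; simpa [dist_eq_norm] using hxd n
  have hrpos : ∀ n, (0 : ℝ) < ‖x n - x₀‖ :=
    fun n => lt_of_le_of_lt (Nat.cast_nonneg n) (hr n)
  set u : ℕ → EuclideanSpace ℝ (Fin d) := fun n => ‖x n - x₀‖⁻¹ • (x n - x₀) with hu
  have hunorm : ∀ n, ‖u n‖ = 1 := by
    intro n
    rw [hu]
    simp only [norm_smul, norm_inv, norm_norm]
    field_simp [(hrpos n).ne']
  have husphere : ∀ n, u n ∈ Metric.sphere (0 : EuclideanSpace ℝ (Fin d)) 1 := by
    intro n; simp [Metric.mem_sphere, dist_eq_norm, hunorm n]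
  obtain ⟨v, hv, φ, hφ, hconv⟩ :=
    (isCompact_sphere (0 : EuclideanSpace ℝ (Fin d)) 1).tendsto_subseq husphere
  have hvnorm : ‖v‖ = 1 := by simpa [dist_eq_norm] using hv
  -- f on the segment towards x n is at most M
  have key : ∀ (t : ℝ) (n : ℕ), 0 ≤ t → t ≤ ‖x n - x₀‖ → f (x₀ + t • u n) ≤ M := by
    intro t n ht htr
    set r : ℝ := ‖x n - x₀‖ with hrdef
    set l : ℝ := t / r with hl
    have hl0 : 0 ≤ l := div_nonneg ht (hrpos n).le
    have hl1 : l ≤ 1 := (div_le_one (hrpos n)).2 htr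
    have heq : x₀ + t • u n = (1 - l) • x₀ + l • (x n) := by
      have : t • u n = l • (x n - x₀) := by
        rw [hu]
        rw [smul_smul, hl, div_eq_mul_inv]
      rw [this]
      module
    rw [heq]
    calc f ((1 - l) • x₀ + l • (x n)) ≤ (1 - l) * f x₀ + l * f (x n) :=
          hf.2 (Set.mem_univ _) (Set.mem_univ _) (by linarith) hl0 (by ring)
      _ ≤ (1 - l) * M + l * M := by
          have h1 : f x₀ ≤ M := le_max_left _ _
          have h2 : f (x n) ≤ M := (hx n).trans (le_max_right _ _)
          have := mul_le_mul_of_nonneg_left h1 (by linarith : (0:ℝ) ≤ 1 - l)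
          have := mul_le_mul_of_nonneg_left h2 hl0
          linarith
      _ = M := by ring
  -- pass to the limit: f (x₀ + t • v) ≤ M for t ≥ 0
  have ray_le : ∀ t : ℝ, 0 ≤ t → f (x₀ + t • v) ≤ M := by
    intro t ht
    have htend : Tendsto (fun k => f (x₀ + t • u (φ k))) atTop (𝓝 (f (x₀ + t • v))) :=
      (hc.tendsto _).comp (tendsto_const_nhds.add (hconv.const_smul t))
    refine le_of_tendsto htend ?_
    filter_upwards [eventually_ge_atTop ⌈t⌉₊] with k hk
    refine key t (φ k) ht ?_
    have h1 : (⌈t⌉₊ : ℝ) ≤ (φ k : ℝ) := by exact_mod_cast hk.trans (hφ.le_apply)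
    have h2 : t ≤ (⌈t⌉₊ : ℝ) := Nat.le_ceil t
    linarith [hr (φ k)]
  -- convexity forces f (x₀ + t • v) ≤ f x₀ for all t ≥ 0
  have ray_min : ∀ t : ℝ, 0 ≤ t → f (x₀ + t • v) ≤ f x₀ := by
    intro t ht
    have htend : Tendsto (fun T : ℝ => (1 - t / T) * f x₀ + (t / T) * M) atTop
        (𝓝 (f x₀)) := by
      have h0 : Tendsto (fun T : ℝ => t / T) atTop (𝓝 0) :=
        tendsto_const_nhds.div_atTop tendsto_id
      have h1 : Tendsto (fun T : ℝ => (1 - t / T) * f x₀ + (t / T) * M) atTop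
          (𝓝 ((1 - 0) * f x₀ + 0 * M)) :=
        (((tendsto_const_nhds : Tendsto (fun _ : ℝ => (1:ℝ)) atTop (𝓝 1)).sub h0).mul
          tendsto_const_nhds).add (h0.mul tendsto_const_nhds)
      simpa using h1
    refine ge_of_tendsto htend ?_
    filter_upwards [eventually_ge_atTop (max t 1)] with T hT
    have hT1 : (1 : ℝ) ≤ T := le_trans (le_max_right _ _) hT
    have hTt : t ≤ T := le_trans (le_max_left _ _) hT
    have hTpos : (0 : ℝ) < T := lt_of_lt_of_le one_pos hT1
    set l : ℝ := t / T with hl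
    have hl0 : 0 ≤ l := div_nonneg ht hTpos.le
    have hl1 : l ≤ 1 := (div_le_one hTpos).2 hTt
    have heq : x₀ + t • v = (1 - l) • x₀ + l • (x₀ + T • v) := by
      have : l • (T • v) = t • v := by
        rw [smul_smul, hl, div_mul_cancel₀ _ hTpos.ne']
      rw [smul_add, this]
      module
    calc f (x₀ + t • v) = f ((1 - l) • x₀ + l • (x₀ + T • v)) := by rw [heq]
      _ ≤ (1 - l) * f x₀ + l * f (x₀ + T • v) :=
          hf.2 (Set.mem_univ _) (Set.mem_univ _) (by linarith) hl0 (by ring)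
      _ ≤ (1 - l) * f x₀ + l * M := by
          have := mul_le_mul_of_nonneg_left (ray_le T hTpos.le) hl0
          linarith
  -- contradiction with boundedness of the argmin set
  obtain ⟨R, hR⟩ := (isBounded_iff_subset_closedBall x₀).1 hb
  have hR0 : 0 ≤ R := by
    have := hR (Set.mem_setOf.2 hx₀)
    simpa [Metric.mem_closedBall] using this
  set t : ℝ := R + 1 with htdef
  have hmem : x₀ + t • v ∈ {x | ∀ y, f x ≤ f y} := by
    intro y
    exact (ray_min t (by linarith)).trans (hx₀ y)
  have := hR hmem
  rw [Metric.mem_closedBall, dist_eq_norm] at this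
  have hnorm : ‖x₀ + t • v - x₀‖ = t := by
    simp [norm_smul, hvnorm, abs_of_nonneg (by linarith : (0:ℝ) ≤ t)]
  rw [hnorm] at this
  linarith

theorem argmin_add_compact_nonempty (d : ℕ)
    (f₁ f₂ : EuclideanSpace ℝ (Fin d) → ℝ)
    (h₁ : ConvexOn ℝ Set.univ f₁) (h₂ : ConvexOn ℝ Set.univ f₂)
    (hS₁ : {x | ∀ y, f₁ x ≤ f₁ y}.Nonempty ∧ IsCompact {x | ∀ y, f₁ x ≤ f₁ y})
    (hS₂ : {x | ∀ y, f₂ x ≤ f₂ y}.Nonempty ∧ IsCompact {x | ∀ y, f₂ x ≤ f₂ y}) :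
    {x | ∀ y, f₁ x + f₂ x ≤ f₁ y + f₂ y}.Nonempty ∧
      IsCompact {x | ∀ y, f₁ x + f₂ x ≤ f₁ y + f₂ y} := by
  obtain ⟨⟨x₁, hx₁⟩, hK₁⟩ := hS₁
  obtain ⟨⟨x₂, hx₂⟩, hK₂⟩ := hS₂
  have hc₁ : Continuous f₁ := continuousOn_univ.1 (h₁.continuousOn isOpen_univ)
  have hc₂ : Continuous f₂ := continuousOn_univ.1 (h₂.continuousOn isOpen_univ)
  have hcg : Continuous (fun x => f₁ x + f₂ x) := hc₁.add hc₂
  have hbdd : IsBounded {x | f₁ x + f₂ x ≤ f₁ 0 + f₂ 0} := by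
    refine (sublevel_bounded h₁ hc₁ hx₁ hK₁.isBounded (f₁ 0 + f₂ 0 - f₂ x₂)).subset ?_
    intro z hz
    have h2 := hx₂ z
    simp only [Set.mem_setOf_eq] at hz ⊢
    linarith
  have hclosed : IsClosed {x | f₁ x + f₂ x ≤ f₁ 0 + f₂ 0} := isClosed_le hcg continuous_const
  have hKcompact : IsCompact {x | f₁ x + f₂ x ≤ f₁ 0 + f₂ 0} :=
    isCompact_of_isClosed_isBounded hclosed hbdd
  have hKne : {x | f₁ x + f₂ x ≤ f₁ 0 + f₂ 0}.Nonempty := ⟨0, Set.mem_setOf.2 le_rfl⟩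
  obtain ⟨z, hzK, hzmin⟩ := hKcompact.exists_isMinOn hKne hcg.continuousOn
  have hzmin' := isMinOn_iff.1 hzmin
  have hzglobal : ∀ y, f₁ z + f₂ z ≤ f₁ y + f₂ y := by
    intro y
    by_cases hy : f₁ y + f₂ y ≤ f₁ 0 + f₂ 0
    · exact hzmin' y hy
    · exact le_trans (hzmin' 0 (Set.mem_setOf.2 le_rfl)) (le_of_not_ge hy)
  refine ⟨⟨z, hzglobal⟩, ?_⟩
  have hclosed' : IsClosed {x | ∀ y, f₁ x + f₂ x ≤ f₁ y + f₂ y} := by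
    have heq : {x | ∀ y, f₁ x + f₂ x ≤ f₁ y + f₂ y}
        = ⋂ y, {x | f₁ x + f₂ x ≤ f₁ y + f₂ y} := by
      ext w; simp [Set.mem_iInter]
    rw [heq]
    exact isClosed_iInter fun y => isClosed_le hcg continuous_const
  have hsub' : {x | ∀ y, f₁ x + f₂ x ≤ f₁ y + f₂ y} ⊆ {x | f₁ x + f₂ x ≤ f₁ 0 + f₂ 0} :=
    fun w hw => hw 0
  exact isCompact_of_isClosed_isBounded hclosed' (hbdd.subset hsub')
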